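/- Let n ≥ 2 be an integer, set ε = 1/n^{100}, and let t be any real number. Let u_a, u_b, u_c be unit vectors in ℝⁿ with ‖u_a + u_b + u_c‖² ≤ 18ε, and let g = (g₁, …, g_n) be a random vector whose coordinates are independent standard Gaussians N(0,1). Then P[⟨u_a, g⟩ ≥ t and ⟨u_b, g⟩ ≥ t] ≤ Φ̄(2t) + 2/n^{25}, where Φ̄(s) = P_{h∼N(0,1)}[h ≥ s] is the standard Gaussian upper tail. -/

import Mathlib

open scoped BigOperators

/-- The standard Gaussian upper tail `Φ̄(t) = P_{g ∼ N(0,1)}[g ≥ t]`. -/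
noncomputable def gaussTail (t : ℝ) : ℝ :=
  ((ProbabilityTheory.gaussianReal 0 1) (Set.Ici t)).toReal

open MeasureTheory ProbabilityTheory Real Set
open scoped ENNReal NNReal BigOperators

lemma gpdf_eval (x : ℝ) : gaussianPDFReal 0 1 x = (Real.sqrt (2*π))⁻¹ * Real.exp (-x^2/2) := by
  simp [gaussianPDFReal]

lemma sqrt2pi_inv_le : (Real.sqrt (2*π))⁻¹ ≤ 1/2 := by
  have h4 : (4:ℝ) ≤ 2*π := by nlinarith [Real.pi_gt_three]
  have : (2:ℝ) ≤ Real.sqrt (2*π) := by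
    have := Real.sqrt_le_sqrt h4
    simpa [show Real.sqrt 4 = 2 by
      rw [show (4:ℝ) = 2^2 by norm_num, Real.sqrt_sq (by norm_num)]] using this
  rw [inv_le_comm₀ (by positivity) (by norm_num)]
  simpa using this

lemma gpdf_mul_le {x : ℝ} (hx : 0 ≤ x) : x * gaussianPDFReal 0 1 x ≤ 1/2 := by
  rw [gpdf_eval]
  have h1 : x * Real.exp (-x^2/2) ≤ 1 := by
    have hexp : x ≤ Real.exp (x^2/2) := by
      have := Real.add_one_le_exp (x^2/2)
      nlinarith
    have hpos : (0:ℝ) < Real.exp (x^2/2) := Real.exp_pos _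
    rw [show -x^2/2 = -(x^2/2) by ring, Real.exp_neg]
    rw [mul_inv_le_iff₀ hpos, one_mul]
    exact hexp
  have h0 : (0:ℝ) ≤ (Real.sqrt (2*π))⁻¹ := by positivity
  calc x * ((Real.sqrt (2*π))⁻¹ * Real.exp (-x^2/2))
      = (x * Real.exp (-x^2/2)) * (Real.sqrt (2*π))⁻¹ := by ring
    _ ≤ 1 * (1/2) := by
        apply mul_le_mul h1 sqrt2pi_inv_le h0 (by norm_num)
    _ = 1/2 := by norm_num

lemma gpdf_mono {x y : ℝ} (h : y^2 ≤ x^2) : gaussianPDFReal 0 1 x ≤ gaussianPDFReal 0 1 y := by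
  rw [gpdf_eval, gpdf_eval]
  have hle : Real.exp (-x^2/2) ≤ Real.exp (-y^2/2) := by
    apply Real.exp_le_exp.2; linarith
  have h0 : (0:ℝ) ≤ (Real.sqrt (2*π))⁻¹ := by positivity
  exact mul_le_mul_of_nonneg_left hle h0

lemma tail_shift (s S δ : ℝ) (hδ0 : 0 ≤ δ) (hδ : δ ≤ 1/2) (h1 : 1 - δ ≤ S) (h2 : S ≤ 1 + δ) :
    gaussianReal 0 1 (Ici (s/S)) ≤ gaussianReal 0 1 (Ici s) + ENNReal.ofReal δ := by
  have hv : (1 : ℝ≥0) ≠ 0 := one_ne_zero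
  have hS0 : (0:ℝ) < S := by linarith
  set a := s / S with ha
  rcases le_or_gt s a with h | h
  · exact le_trans (measure_mono (Ici_subset_Ici.2 h)) (le_add_right le_rfl)
  · have hdisj : Disjoint (Ico a s) (Ici s) := by
      rw [Set.disjoint_left]
      rintro x ⟨_, hx⟩ hx'
      exact absurd hx' (not_le.2 hx)
    have hsplit : gaussianReal 0 1 (Ici a) = gaussianReal 0 1 (Ico a s) + gaussianReal 0 1 (Ici s) := by
      rw [← Ico_union_Ici_eq_Ici h.le, measure_union hdisj measurableSet_Ici]
    -- bound Ico part
    have key : gaussianReal 0 1 (Ico a s) ≤ ENNReal.ofReal δ := by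
      obtain ⟨M, hM0, hMb, hMδ⟩ : ∃ M : ℝ, 0 ≤ M ∧ (∀ x ∈ Ico a s, gaussianPDFReal 0 1 x ≤ M)
          ∧ M * (s - a) ≤ δ := by
        rcases le_or_gt 0 s with hs | hs
        · -- s > 0 necessarily, S > 1
          have hs' : 0 < s := by
            rcases eq_or_lt_of_le hs with h' | h'
            · exfalso
              have ha0 : a = 0 := by rw [ha, ← h', zero_div]
              rw [ha0, ← h'] at h; exact lt_irrefl 0 h
            · exact h'
          have hS1 : 1 < S := by
            by_contra hc
            push_neg at hc
            have : s ≤ s / S := by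
              rw [le_div_iff₀ hS0]; nlinarith
            linarith [this.trans_lt h]
          have ha0 : 0 < a := div_pos hs' hS0
          refine ⟨gaussianPDFReal 0 1 a, gaussianPDFReal_nonneg _ _ _, ?_, ?_⟩
          · intro x hx
            exact gpdf_mono (by nlinarith [hx.1, hx.2])
          · have hsa : s - a = a * (S - 1) := by
              rw [ha]; field_simp
            rw [hsa]
            have := gpdf_mul_le ha0.le
            calc gaussianPDFReal 0 1 a * (a * (S-1)) = (a * gaussianPDFReal 0 1 a) * (S-1) := by ring
              _ ≤ (1/2) * δ := by
                  apply mul_le_mul this (by linarith) (by linarith) (by norm_num)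
              _ ≤ δ := by linarith
        · -- s < 0, S < 1
          have hS1 : S < 1 := by
            by_contra hc
            push_neg at hc
            have hprod : 0 ≤ (-s) * (S - 1) := mul_nonneg (by linarith) (by linarith)
            have : s ≤ s / S := by
              rw [le_div_iff₀ hS0]; nlinarith
            linarith [h.trans_le this]
          refine ⟨gaussianPDFReal 0 1 s, gaussianPDFReal_nonneg _ _ _, ?_, ?_⟩
          · intro x hx
            refine gpdf_mono ?_
            have hxs : x ≤ s := hx.2.le
            nlinarith
          · have hsa : s - a = (-s) * (1 - S) / S := by
              rw [ha]; field_simp; ring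
            have hSmid : (1:ℝ)/2 ≤ S := by linarith
            have h2' : (-s) * (1 - S) / S ≤ (-s) * δ * 2 := by
              rw [div_le_iff₀ hS0]
              have e1 : (-s) * (1 - S) ≤ (-s) * δ :=
                mul_le_mul_of_nonneg_left (by linarith) (by linarith)
              have e2 : (-s) * δ * 1 ≤ (-s) * δ * (2 * S) :=
                mul_le_mul_of_nonneg_left (by linarith) (mul_nonneg (by linarith) hδ0)
              nlinarith
            have hmul := gpdf_mul_le (x := -s) (by linarith)
            have hpdfeven : gaussianPDFReal 0 1 (-s) = gaussianPDFReal 0 1 s := by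
              simp [gaussianPDFReal]
            rw [hpdfeven] at hmul
            calc gaussianPDFReal 0 1 s * (s - a) ≤ gaussianPDFReal 0 1 s * ((-s) * δ * 2) := by
                  apply mul_le_mul_of_nonneg_left _ (gaussianPDFReal_nonneg _ _ _)
                  rw [hsa]; exact h2'
              _ = ((-s) * gaussianPDFReal 0 1 s) * (2 * δ) := by ring
              _ ≤ (1/2) * (2*δ) := by
                  apply mul_le_mul_of_nonneg_right hmul (by linarith)
              _ = δ := by ring
      calc gaussianReal 0 1 (Ico a s) = ∫⁻ x in Ico a s, gaussianPDF 0 1 x := gaussianReal_apply 0 hv _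
        _ ≤ ∫⁻ _x in Ico a s, ENNReal.ofReal M := by
            apply setLIntegral_mono measurable_const
            intro x hx
            exact ENNReal.ofReal_le_ofReal (hMb x hx)
        _ = ENNReal.ofReal M * volume (Ico a s) := by
            rw [setLIntegral_const]
        _ = ENNReal.ofReal (M * (s - a)) := by
            rw [Real.volume_Ico, ← ENNReal.ofReal_mul hM0]
        _ ≤ ENNReal.ofReal δ := ENNReal.ofReal_le_ofReal hMδ
    calc gaussianReal 0 1 (Ici a) = gaussianReal 0 1 (Ico a s) + gaussianReal 0 1 (Ici s) := hsplit
      _ ≤ ENNReal.ofReal δ + gaussianReal 0 1 (Ici s) := add_le_add_left key _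
      _ = gaussianReal 0 1 (Ici s) + ENNReal.ofReal δ := add_comm _ _

lemma lintegral_pi_prod {m : ℕ} (f : Fin m → ℝ → ℝ≥0∞) (hf : ∀ i, Measurable (f i)) :
    ∫⁻ x : Fin m → ℝ, ∏ i, f i (x i) ∂(Measure.pi fun _ => (volume : Measure ℝ))
      = ∏ i, ∫⁻ y, f i y := by
  induction m with
  | zero =>
      simp [Measure.pi_empty_univ]
  | succ m ih =>
      have h := (measurePreserving_piFinSuccAbove (fun _ : Fin (m+1) => (volume : Measure ℝ)) 0).symm
      rw [← h.lintegral_comp_emb (MeasurableEquiv.measurableEmbedding _)]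
      simp_rw [MeasurableEquiv.piFinSuccAbove_symm_apply, Fin.insertNthEquiv,
        Fin.prod_univ_succ, Fin.insertNth_zero]
      simp only [Fin.zero_succAbove, cast_eq, Function.comp_def, Equiv.coe_fn_mk,
        Fin.cons_zero, Fin.cons_succ]
      rw [lintegral_prod_mul (f := f 0) (g := fun x : Fin m → ℝ => ∏ i, f i.succ (x i))
        (hf 0).aemeasurable
        (Finset.measurable_prod _ fun i _ =>
          ((hf i.succ).comp (measurable_pi_apply i))).aemeasurable]
      rw [ih (fun i => f i.succ) (fun i => hf i.succ)]

lemma pi_gauss_eq {m : ℕ} :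
    (Measure.pi fun _ : Fin m => gaussianReal 0 1) =
      (volume : Measure (Fin m → ℝ)).withDensity (fun g => ∏ i, gaussianPDF 0 1 (g i)) := by
  have hv : (1 : ℝ≥0) ≠ 0 := one_ne_zero
  refine Measure.pi_eq fun s hs => ?_
  rw [withDensity_apply _ (MeasurableSet.univ_pi hs)]
  have hvol : (volume : Measure (Fin m → ℝ)) = Measure.pi fun _ => (volume : Measure ℝ) :=
    rfl
  rw [hvol, ← lintegral_indicator (MeasurableSet.univ_pi hs)]
  have hind : ∀ x : Fin m → ℝ,
      (Set.univ.pi s).indicator (fun g => ∏ i, gaussianPDF 0 1 (g i)) x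
        = ∏ i, (s i).indicator (gaussianPDF 0 1) (x i) := by
    intro x
    by_cases hx : x ∈ Set.univ.pi s
    · rw [Set.indicator_of_mem hx]
      refine Finset.prod_congr rfl fun i _ => ?_
      rw [Set.indicator_of_mem (hx i (Set.mem_univ i))]
    · rw [Set.indicator_of_notMem hx]
      rw [Set.mem_univ_pi] at hx
      push_neg at hx
      obtain ⟨j, hj⟩ := hx
      exact (Finset.prod_eq_zero (Finset.mem_univ j)
        (by rw [Set.indicator_of_notMem hj])).symm
  simp_rw [hind]
  rw [lintegral_pi_prod _ (fun i => (measurable_gaussianPDF 0 1).indicator (hs i))]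
  refine Finset.prod_congr rfl fun i _ => ?_
  rw [lintegral_indicator (hs i), ← gaussianReal_apply 0 hv]

lemma gpdf_eval' (x : ℝ) : gaussianPDFReal 0 1 x = (Real.sqrt (2*π))⁻¹ * Real.exp (-x^2/2) := by
  simp [gaussianPDFReal]

lemma map_withDensity_inv {m : ℕ} (e : (Fin m → ℝ) ≃ᵐ (Fin m → ℝ))
    (hp : MeasurePreserving e volume volume) (D : (Fin m → ℝ) → ℝ≥0∞)
    (hinv : ∀ x, D (e x) = D x) :
    Measure.map e (volume.withDensity D) = volume.withDensity D := by
  ext s hs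
  rw [Measure.map_apply e.measurable hs, withDensity_apply _ (e.measurable hs),
    withDensity_apply _ hs]
  calc ∫⁻ x in e ⁻¹' s, D x = ∫⁻ x in e ⁻¹' s, D (e x) := by simp_rw [hinv]
    _ = ∫⁻ y in s, D y := hp.setLIntegral_comp_preimage_emb e.measurableEmbedding D s

lemma key_tail {m : ℕ} (i₀ : Fin m) (u : Fin m → ℝ) (hu : ∑ i, u i ^ 2 = 1) (s : ℝ) :
    (Measure.pi fun _ : Fin m => gaussianReal 0 1) {g | s ≤ ∑ i, u i * g i}
      = gaussianReal 0 1 (Ici s) := by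
  classical
  set u' : (EuclideanSpace ℝ (Fin m)) := (WithLp.equiv 2 (Fin m → ℝ)).symm u with hu'
  have hcoord : ∀ i, u' i = u i := fun i => rfl
  have hnormsum : ∀ y : (EuclideanSpace ℝ (Fin m)), ∑ i, (y i)^2 = ‖y‖^2 := by
    intro y
    rw [EuclideanSpace.norm_eq, Real.sq_sqrt (by positivity)]
    simp [sq_abs]
  have hnorm : ‖u'‖ = 1 := by
    have := hnormsum u'
    simp only [hcoord] at this
    rw [hu] at this
    nlinarith [norm_nonneg u']
  have hON : Orthonormal ℝ (({i₀} : Set (Fin m)).restrict (fun _ : Fin m => u')) := by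
    rw [orthonormal_iff_ite]
    intro i j
    have hij : i = j := Subtype.ext (by
      have hi := i.2; have hj := j.2
      simp only [Set.mem_singleton_iff] at hi hj
      rw [hi, hj])
    subst hij
    rw [if_pos rfl]
    show (inner ℝ u' u' : ℝ) = 1
    rw [real_inner_self_eq_norm_sq, hnorm]
    norm_num
  obtain ⟨b, hb⟩ := hON.exists_orthonormalBasis_extension_of_card_eq
    (by simpa using finrank_euclideanSpace_fin (𝕜 := ℝ) (n := m))
  have hbi₀ : b i₀ = u' := hb i₀ (Set.mem_singleton i₀)
  set Q : (EuclideanSpace ℝ (Fin m)) ≃ₗᵢ[ℝ] (EuclideanSpace ℝ (Fin m)) := b.repr.symm with hQ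
  set φ : (EuclideanSpace ℝ (Fin m)) ≃ᵐ (Fin m → ℝ) := (MeasurableEquiv.toLp 2 (Fin m → ℝ)).symm with hφ'
  set T : (Fin m → ℝ) ≃ᵐ (Fin m → ℝ) := (φ.symm.trans Q.toMeasurableEquiv).trans φ with hT
  have hTapp : ∀ (g : Fin m → ℝ) (i : Fin m), T g i = (Q (φ.symm g) : (EuclideanSpace ℝ (Fin m))) i := fun g i => rfl
  have hφmp := EuclideanSpace.volume_preserving_symm_measurableEquiv_toLp (Fin m)
  have hQmp : MeasurePreserving (Q : (EuclideanSpace ℝ (Fin m)) → (EuclideanSpace ℝ (Fin m))) volume volume := Q.measurePreserving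
  have hTmp : MeasurePreserving T volume volume := by
    exact (hφmp.comp (hQmp.comp hφmp.symm))
  set D : (Fin m → ℝ) → ℝ≥0∞ := fun g => ∏ i, gaussianPDF 0 1 (g i) with hD
  have hDval : ∀ g : Fin m → ℝ, D g
      = ENNReal.ofReal (((Real.sqrt (2*π))⁻¹)^m * Real.exp (-(∑ i, g i ^2)/2)) := by
    intro g
    rw [hD]
    simp only [gaussianPDF]
    rw [← ENNReal.ofReal_prod_of_nonneg (fun i _ => gaussianPDFReal_nonneg 0 1 (g i))]
    congr 1
    simp_rw [gpdf_eval']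
    rw [Finset.prod_mul_distrib, Finset.prod_const, ← Real.exp_sum]
    congr 1
    · simp
    · rw [← Finset.sum_div]
      congr 1
      rw [← Finset.sum_neg_distrib]
  have hDinv : ∀ g, D (T g) = D g := by
    intro g
    have hs2 : ∑ i, (T g) i ^ 2 = ∑ i, g i ^ 2 := by
      calc ∑ i, (T g) i ^ 2 = ∑ i, ((Q (φ.symm g) : (EuclideanSpace ℝ (Fin m))) i)^2 :=
            Finset.sum_congr rfl fun i _ => by rw [hTapp]
        _ = ‖(Q (φ.symm g) : (EuclideanSpace ℝ (Fin m)))‖^2 := hnormsum _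
        _ = ‖φ.symm g‖^2 := by rw [Q.norm_map]
        _ = ∑ i, ((φ.symm g : (EuclideanSpace ℝ (Fin m))) i)^2 := (hnormsum _).symm
        _ = ∑ i, g i ^ 2 := rfl
    rw [hDval, hDval, hs2]
  have hmap : (Measure.pi fun _ : Fin m => gaussianReal 0 1).map T
      = Measure.pi fun _ : Fin m => gaussianReal 0 1 := by
    rw [pi_gauss_eq]
    exact map_withDensity_inv T hTmp D hDinv
  have hSmeas : MeasurableSet {g : Fin m → ℝ | s ≤ ∑ i, u i * g i} := by
    apply measurableSet_le measurable_const
    exact Finset.measurable_sum _ fun i _ => (measurable_pi_apply i).const_mul _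
  have hpre : T ⁻¹' {g : Fin m → ℝ | s ≤ ∑ i, u i * g i} = {g : Fin m → ℝ | s ≤ g i₀} := by
    ext g
    simp only [Set.mem_preimage, Set.mem_setOf_eq]
    have hkeyeq : ∑ i, u i * T g i = g i₀ := by
      have e0 : (Q (EuclideanSpace.single i₀ (1:ℝ)) : (EuclideanSpace ℝ (Fin m))) = u' := by
        rw [hQ, ← hbi₀, ← b.repr_self i₀]
        exact b.repr.symm_apply_apply _
      calc ∑ i, u i * T g i = (inner ℝ u' (Q (φ.symm g)) : ℝ) := by
            rw [PiLp.inner_apply]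
            refine (Finset.sum_congr rfl fun i _ => ?_).symm
            rw [hTapp]
            simp [hcoord, RCLike.inner_apply, mul_comm]
        _ = (inner ℝ (Q (EuclideanSpace.single i₀ (1:ℝ))) (Q (φ.symm g)) : ℝ) := by rw [e0]
        _ = (inner ℝ (EuclideanSpace.single i₀ (1:ℝ)) (φ.symm g : (EuclideanSpace ℝ (Fin m))) : ℝ) := Q.inner_map_map _ _
        _ = g i₀ := by
            rw [EuclideanSpace.inner_single_left]
            simp
            rfl
    rw [hkeyeq]
  have hmarg : (Measure.pi fun _ : Fin m => gaussianReal 0 1) {g : Fin m → ℝ | s ≤ g i₀}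
      = gaussianReal 0 1 (Ici s) := by
    have hset : {g : Fin m → ℝ | s ≤ g i₀}
        = Set.univ.pi (fun i => if i = i₀ then Ici s else univ) := by
      ext g
      simp only [Set.mem_setOf_eq, Set.mem_univ_pi]
      constructor
      · intro h i
        by_cases hi : i = i₀ <;> simp [hi, h]
      · intro h
        have := h i₀
        simpa using this
    rw [hset, Measure.pi_pi]
    rw [Finset.prod_eq_single i₀]
    · simp
    · intro i _ hi; simp [hi]
    · intro h; exact absurd (Finset.mem_univ i₀) h
  calc (Measure.pi fun _ : Fin m => gaussianReal 0 1) {g | s ≤ ∑ i, u i * g i}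
      = ((Measure.pi fun _ : Fin m => gaussianReal 0 1).map T) {g | s ≤ ∑ i, u i * g i} := by
        rw [hmap]
    _ = (Measure.pi fun _ : Fin m => gaussianReal 0 1)
          (T ⁻¹' {g : Fin m → ℝ | s ≤ ∑ i, u i * g i}) := Measure.map_apply T.measurable hSmeas
    _ = (Measure.pi fun _ : Fin m => gaussianReal 0 1) {g : Fin m → ℝ | s ≤ g i₀} := by rw [hpre]
    _ = gaussianReal 0 1 (Ici s) := hmarg

lemma euc_norm_eq {m : ℕ} (v : Fin m → ℝ) :
    ‖(WithLp.equiv 2 (Fin m → ℝ)).symm v‖ = Real.sqrt (∑ i, v i ^ 2) := by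
  rw [EuclideanSpace.norm_eq]
  congr 1
  exact Finset.sum_congr rfl fun i _ => by
    rw [Real.norm_eq_abs, sq_abs]; rfl

theorem gaussian_correlation_bound
    (n : ℕ) (hn : 2 ≤ n) (ε : ℝ) (hε : ε = 1 / (n : ℝ) ^ 100) (t : ℝ)
    (ua ub uc : Fin n → ℝ)
    (hua : ∑ i, ua i ^ 2 = 1) (hub : ∑ i, ub i ^ 2 = 1) (huc : ∑ i, uc i ^ 2 = 1)
    (hbal : ∑ i, (ua i + ub i + uc i) ^ 2 ≤ 18 * ε) :
    (MeasureTheory.Measure.pi fun _ : Fin n => ProbabilityTheory.gaussianReal 0 1)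
        {g : Fin n → ℝ | t ≤ ∑ i, ua i * g i ∧ t ≤ ∑ i, ub i * g i} ≤
      ENNReal.ofReal (gaussTail (2 * t) + 2 / (n : ℝ) ^ 25) := by
  classical
  have h2n : (2:ℝ) ≤ (n:ℝ) := by exact_mod_cast hn
  have hnpos : (0:ℝ) < (n:ℝ) := by linarith
  have hε0 : 0 < ε := by rw [hε]; positivity
  -- step 1 : event inclusion
  have hsub : {g : Fin n → ℝ | t ≤ ∑ i, ua i * g i ∧ t ≤ ∑ i, ub i * g i}
      ⊆ {g : Fin n → ℝ | 2*t ≤ ∑ i, (ua i + ub i) * g i} := by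
    rintro g ⟨h1, h2⟩
    simp only [Set.mem_setOf_eq]
    have hsum : ∑ i, (ua i + ub i) * g i = ∑ i, ua i * g i + ∑ i, ub i * g i := by
      rw [← Finset.sum_add_distrib]
      exact Finset.sum_congr rfl fun i _ => by ring
    rw [hsum]; linarith
  refine le_trans (measure_mono hsub) ?_
  -- δ
  set δ := Real.sqrt (18 * ε) with hδdef
  have hδ0 : 0 ≤ δ := Real.sqrt_nonneg _
  have hδhalf : δ ≤ 1/2 := by
    have hn100 : (72:ℝ) ≤ (n:ℝ)^100 :=
      le_trans (by norm_num) (pow_le_pow_left₀ (by norm_num) h2n 100)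
    have h18 : 18 * ε ≤ (1/2:ℝ)^2 := by
      rw [hε, mul_one_div, div_le_iff₀ (by positivity)]
      nlinarith
    calc δ ≤ Real.sqrt ((1/2:ℝ)^2) := Real.sqrt_le_sqrt h18
      _ = 1/2 := Real.sqrt_sq (by norm_num)
  have hδ25 : δ ≤ 2/(n:ℝ)^25 := by
    have hkey : 18 * ε ≤ (2/(n:ℝ)^25)^2 := by
      rw [hε, mul_one_div, div_pow, div_le_div_iff₀ (by positivity) (by positivity)]
      have e1 : ((n:ℝ)^25)^2 = (n:ℝ)^50 := by rw [← pow_mul]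
      have e2 : (n:ℝ)^100 = (n:ℝ)^50 * (n:ℝ)^50 := by rw [← pow_add]
      have hp : (2:ℝ)^50 ≤ (n:ℝ)^50 := pow_le_pow_left₀ (by norm_num) h2n 50
      have hpos : (0:ℝ) < (n:ℝ)^50 := by positivity
      rw [e1, e2]
      nlinarith
    calc δ ≤ Real.sqrt ((2/(n:ℝ)^25)^2) := Real.sqrt_le_sqrt hkey
      _ = 2/(n:ℝ)^25 := Real.sqrt_sq (by positivity)
  -- S
  set S := Real.sqrt (∑ i, (ua i + ub i)^2) with hSdef
  have hS0' : 0 ≤ S := Real.sqrt_nonneg _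
  set a' : EuclideanSpace ℝ (Fin n) := (WithLp.equiv 2 (Fin n → ℝ)).symm ua with ha'
  set b' : EuclideanSpace ℝ (Fin n) := (WithLp.equiv 2 (Fin n → ℝ)).symm ub with hb'
  set c' : EuclideanSpace ℝ (Fin n) := (WithLp.equiv 2 (Fin n → ℝ)).symm uc with hc'
  have hnc : ‖c'‖ = 1 := by rw [hc', euc_norm_eq, huc, Real.sqrt_one]
  have habc : a' + b' + c' = (WithLp.equiv 2 (Fin n → ℝ)).symm (fun i => ua i + ub i + uc i) := rfl
  have hab : a' + b' = (WithLp.equiv 2 (Fin n → ℝ)).symm (fun i => ua i + ub i) := rfl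
  have hnabc : ‖a' + b' + c'‖ ≤ δ := by
    rw [habc, euc_norm_eq, hδdef]
    exact Real.sqrt_le_sqrt hbal
  have hSnorm : ‖a' + b'‖ = S := by rw [hab, euc_norm_eq, hSdef]
  have hS2 : S ≤ 1 + δ := by
    have : a' + b' = (a' + b' + c') - c' := by abel
    calc S = ‖(a' + b' + c') - c'‖ := by rw [← this, hSnorm]
      _ ≤ ‖a' + b' + c'‖ + ‖c'‖ := norm_sub_le (a' + b' + c') c'
      _ ≤ δ + 1 := by rw [hnc]; linarith
      _ = 1 + δ := by ring
  have hS1 : 1 - δ ≤ S := by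
    have hthis := norm_sub_le (a' + b' + c') (a' + b')
    have hceq : a' + b' + c' - (a' + b') = c' := by abel
    rw [hceq, hnc, hSnorm] at hthis
    linarith [hthis]
  have hS0 : 0 < S := by linarith
  -- event rewrite
  have hev : {g : Fin n → ℝ | 2*t ≤ ∑ i, (ua i + ub i) * g i}
      = {g : Fin n → ℝ | (2*t)/S ≤ ∑ i, ((ua i + ub i)/S) * g i} := by
    ext g
    simp only [Set.mem_setOf_eq]
    have hq : ∑ i, ((ua i + ub i)/S) * g i = (∑ i, (ua i + ub i) * g i)/S := by
      rw [Finset.sum_div]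
      exact Finset.sum_congr rfl fun i _ => by ring
    rw [hq, div_le_div_iff_of_pos_right hS0]
  have hSsq : S^2 = ∑ i, (ua i + ub i)^2 := Real.sq_sqrt (by positivity)
  have hunit : ∑ i, ((ua i + ub i)/S)^2 = 1 := by
    have : ∑ i, ((ua i + ub i)/S)^2 = (∑ i, (ua i + ub i)^2)/S^2 := by
      rw [Finset.sum_div]
      exact Finset.sum_congr rfl fun i _ => by rw [div_pow]
    rw [this, ← hSsq, div_self (pow_ne_zero _ hS0.ne')]
  have i₀ : Fin n := ⟨0, by omega⟩
  have hfin : gaussianReal 0 1 (Ici (2*t)) ≠ ⊤ := measure_ne_top _ _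
  calc (Measure.pi fun _ : Fin n => gaussianReal 0 1) {g : Fin n → ℝ | 2*t ≤ ∑ i, (ua i + ub i) * g i}
      = (Measure.pi fun _ : Fin n => gaussianReal 0 1)
          {g : Fin n → ℝ | (2*t)/S ≤ ∑ i, ((ua i + ub i)/S) * g i} := by rw [hev]
    _ = gaussianReal 0 1 (Ici ((2*t)/S)) := key_tail i₀ _ hunit _
    _ ≤ gaussianReal 0 1 (Ici (2*t)) + ENNReal.ofReal δ := tail_shift (2*t) S δ hδ0 hδhalf hS1 hS2
    _ = ENNReal.ofReal (gaussTail (2*t)) + ENNReal.ofReal δ := by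
        rw [show gaussTail (2*t) = (gaussianReal 0 1 (Set.Ici (2*t))).toReal from rfl,
          ENNReal.ofReal_toReal hfin]
    _ = ENNReal.ofReal (gaussTail (2*t) + δ) := (ENNReal.ofReal_add ENNReal.toReal_nonneg hδ0).symm
    _ ≤ ENNReal.ofReal (gaussTail (2*t) + 2/(n:ℝ)^25) := ENNReal.ofReal_le_ofReal (by linarith)
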